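/- Let e be a face of an element K with β Lipschitz and |β·n(x)| > h_K for all x ∈ e (i.e., e ∉ E_h⁰), and let β^c be any constant vector with |β(x) − β^c| ≤ |β|_{1,∞} h_K on K. Then for any φ, ψ ∈ L₂(e): |∫_e ((β − β^c)·n) φ ψ ds| ≤ |β|_{1,∞} h_K^{1/2} ‖φ‖_{L₂(e)} · ‖ |β·n|^{1/2} ψ ‖_{L₂(e)}. -/

import Mathlib

open MeasureTheory
open scoped RealInnerProductSpace

/-- key mechanism of the optimal estimate under mesh condition (3.10):
let `ν` be the surface measure on a face `e ∉ E_h⁰` of element `K` with (constant) unit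
normal `n`, so that `h_K < |β·n|` on `e`, and let `β^c` be a constant approximation with
`‖β − β^c‖ ≤ L h_K` on `e` (`L = |β|_{1,∞}`). Then for `φ, ψ ∈ L₂(e)`:
`|∫_e ((β−β^c)·n) φ ψ| ≤ L √h_K ‖φ‖_{L₂(e)} ‖ |β·n|^{1/2} ψ ‖_{L₂(e)}`. -/
theorem weak_galerkin_stmt_14 {d : ℕ} (ν : Measure (EuclideanSpace ℝ (Fin d)))
    (β : EuclideanSpace ℝ (Fin d) → EuclideanSpace ℝ (Fin d))
    (βc n : EuclideanSpace ℝ (Fin d)) (hK L : ℝ)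
    (φ ψ : EuclideanSpace ℝ (Fin d) → ℝ)
    (hn : ‖n‖ = 1) (hL : 0 ≤ L) (hhK : 0 ≤ hK)
    (hfar : ∀ᵐ x ∂ν, hK < |⟪β x, n⟫|)
    (hclose : ∀ᵐ x ∂ν, ‖β x - βc‖ ≤ L * hK)
    (hint : Integrable (fun x => ⟪β x - βc, n⟫ * (φ x * ψ x)) ν)
    (hφ : Integrable (fun x => (φ x) ^ 2) ν)
    (hψ : Integrable (fun x => |⟪β x, n⟫| * (ψ x) ^ 2) ν) :
    |∫ x, ⟪β x - βc, n⟫ * (φ x * ψ x) ∂ν| ≤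
      L * Real.sqrt hK * Real.sqrt (∫ x, (φ x) ^ 2 ∂ν) *
        Real.sqrt (∫ x, |⟪β x, n⟫| * (ψ x) ^ 2 ∂ν) := by
  set A : EuclideanSpace ℝ (Fin d) → ℝ := fun x => Real.sqrt (φ x ^ 2) with hA
  set B : EuclideanSpace ℝ (Fin d) → ℝ :=
    fun x => Real.sqrt (|⟪β x, n⟫| * ψ x ^ 2) with hB
  have hAeq : ∀ x, A x = |φ x| := fun x => Real.sqrt_sq_eq_abs _
  have hBeq : ∀ x, B x = Real.sqrt |⟪β x, n⟫| * |ψ x| := fun x => by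
    show Real.sqrt (|⟪β x, n⟫| * ψ x ^ 2) = _
    rw [Real.sqrt_mul (abs_nonneg _), Real.sqrt_sq_eq_abs]
  have hAsq : ∀ x, A x ^ 2 = φ x ^ 2 := fun x => by
    rw [hAeq]; exact sq_abs _
  have hBsq : ∀ x, B x ^ 2 = |⟪β x, n⟫| * ψ x ^ 2 := fun x =>
    Real.sq_sqrt (mul_nonneg (abs_nonneg _) (sq_nonneg _))
  have hAm : AEStronglyMeasurable A ν :=
    (Real.continuous_sqrt.comp_aestronglyMeasurable hφ.aestronglyMeasurable)
  have hBm : AEStronglyMeasurable B ν :=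
    (Real.continuous_sqrt.comp_aestronglyMeasurable hψ.aestronglyMeasurable)
  have hA2 : MemLp A 2 ν := by
    rw [memLp_two_iff_integrable_sq hAm]
    simpa only [hAsq] using hφ
  have hB2 : MemLp B 2 ν := by
    rw [memLp_two_iff_integrable_sq hBm]
    simpa only [hBsq] using hψ
  -- pointwise bound
  have hpt : ∀ᵐ x ∂ν, |⟪β x - βc, n⟫ * (φ x * ψ x)| ≤
      L * Real.sqrt hK * (A x * B x) := by
    filter_upwards [hfar, hclose] with x h1 h2
    have hb : |⟪β x - βc, n⟫| ≤ L * hK := by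
      calc |⟪β x - βc, n⟫| ≤ ‖β x - βc‖ * ‖n‖ := abs_real_inner_le_norm _ _
        _ = ‖β x - βc‖ := by rw [hn, mul_one]
        _ ≤ L * hK := h2
    have hsq : L * hK ≤ L * Real.sqrt hK * Real.sqrt |⟪β x, n⟫| := by
      have key : L * hK = L * Real.sqrt hK * Real.sqrt hK := by
        rw [mul_assoc, Real.mul_self_sqrt hhK]
      rw [key]
      exact mul_le_mul_of_nonneg_left (Real.sqrt_le_sqrt h1.le)
        (mul_nonneg hL (Real.sqrt_nonneg _))
    calc |⟪β x - βc, n⟫ * (φ x * ψ x)| = |⟪β x - βc, n⟫| * (|φ x| * |ψ x|) := by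
          rw [abs_mul, abs_mul]
      _ ≤ (L * Real.sqrt hK * Real.sqrt |⟪β x, n⟫|) * (|φ x| * |ψ x|) :=
          mul_le_mul_of_nonneg_right (hb.trans hsq)
            (mul_nonneg (abs_nonneg _) (abs_nonneg _))
      _ = L * Real.sqrt hK * (A x * B x) := by
          rw [hAeq, hBeq]; ring
  have hABint : Integrable (fun x => A x * B x) ν := by
    refine Integrable.mono' (hφ.add hψ) (hAm.mul hBm)
      (Filter.Eventually.of_forall fun x => ?_)
    have h1 : 0 ≤ A x := Real.sqrt_nonneg _
    have h2 : 0 ≤ B x := Real.sqrt_nonneg _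
    have : A x * B x ≤ A x ^ 2 + B x ^ 2 := by nlinarith [sq_nonneg (A x - B x)]
    rw [Real.norm_of_nonneg (mul_nonneg h1 h2)]
    rw [hAsq, hBsq] at this
    exact this
  have step1 : |∫ x, ⟪β x - βc, n⟫ * (φ x * ψ x) ∂ν| ≤
      ∫ x, L * Real.sqrt hK * (A x * B x) ∂ν := by
    calc |∫ x, ⟪β x - βc, n⟫ * (φ x * ψ x) ∂ν|
        ≤ ∫ x, |⟪β x - βc, n⟫ * (φ x * ψ x)| ∂ν := by
          exact norm_integral_le_integral_norm (fun x => ⟪β x - βc, n⟫ * (φ x * ψ x))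
      _ ≤ _ := integral_mono_ae hint.abs (hABint.const_mul _) hpt
  have step2 : ∫ x, A x * B x ∂ν ≤
      Real.sqrt (∫ x, φ x ^ 2 ∂ν) * Real.sqrt (∫ x, |⟪β x, n⟫| * ψ x ^ 2 ∂ν) := by
    have hconj : Real.HolderConjugate 2 2 := Real.HolderConjugate.two_two
    have := integral_mul_le_Lp_mul_Lq_of_nonneg hconj
      (f := A) (g := B)
      (Filter.Eventually.of_forall fun x => Real.sqrt_nonneg _)
      (Filter.Eventually.of_forall fun x => Real.sqrt_nonneg _)
      (by simpa using hA2) (by simpa using hB2)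
    calc ∫ x, A x * B x ∂ν
        ≤ (∫ x, A x ^ (2:ℝ) ∂ν) ^ (1/(2:ℝ)) * (∫ x, B x ^ (2:ℝ) ∂ν) ^ (1/(2:ℝ)) := this
      _ = Real.sqrt (∫ x, φ x ^ 2 ∂ν) * Real.sqrt (∫ x, |⟪β x, n⟫| * ψ x ^ 2 ∂ν) := by
          rw [Real.sqrt_eq_rpow, Real.sqrt_eq_rpow]
          congr 1 <;> congr 1 <;> refine integral_congr_ae (Filter.Eventually.of_forall fun x => ?_) <;>
            simp only [] <;>
            rw [show ((2:ℝ) = ((2:ℕ):ℝ)) by norm_num, Real.rpow_natCast]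
          · exact hAsq x
          · exact hBsq x
  calc |∫ x, ⟪β x - βc, n⟫ * (φ x * ψ x) ∂ν|
      ≤ ∫ x, L * Real.sqrt hK * (A x * B x) ∂ν := step1
    _ = L * Real.sqrt hK * ∫ x, A x * B x ∂ν := by rw [integral_const_mul]
    _ ≤ L * Real.sqrt hK *
        (Real.sqrt (∫ x, φ x ^ 2 ∂ν) * Real.sqrt (∫ x, |⟪β x, n⟫| * ψ x ^ 2 ∂ν)) :=
        mul_le_mul_of_nonneg_left step2 (mul_nonneg hL (Real.sqrt_nonneg _))
    _ = L * Real.sqrt hK * Real.sqrt (∫ x, φ x ^ 2 ∂ν) *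
        Real.sqrt (∫ x, |⟪β x, n⟫| * ψ x ^ 2 ∂ν) := by ring
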